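/- Suppose the 8-tuple (A₁₁, A₁₂, A₂₁, A₂₂, x̄₁, x̄₂, x₁*, x₂*) satisfies the system (S) and additionally A₂₁ > 0 and A₂₂ < 0. Then for every x ≥ x̄₂ one has s₂ − x ≤ ρ·(φ₂(x₂*) − c − λ(x − x₂*)); in particular the function Ṽ₂(x) = φ₂(x₂*) − c − λ(x − x₂*) on [x̄₂, ∞) satisfies −ρṼ₂(x) + (s₂ − x) ≤ 0 there. -/

import Mathlib

open Real Filter Set

set_option maxHeartbeats 1000000

/-- `φ₁(x) = A₁₁ e^{θx} + A₁₂ e^{−θx} + (x − s₁)/ρ`. -/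
noncomputable def phi1 (ρ θ s1 A11 A12 : ℝ) : ℝ → ℝ :=
  fun x => A11 * Real.exp (θ * x) + A12 * Real.exp (-(θ * x)) + (x - s1) / ρ

/-- `φ₂(x) = A₂₁ e^{θx} + A₂₂ e^{−θx} + (s₂ − x)/ρ`. -/
noncomputable def phi2 (ρ θ s2 A21 A22 : ℝ) : ℝ → ℝ :=
  fun x => A21 * Real.exp (θ * x) + A22 * Real.exp (-(θ * x)) + (s2 - x) / ρ

/-- The system (S): order conditions together with the ten equations, where
`θ = √(2ρ/σ²)`. -/
def SystemS (ρ σ lam lamt c ct s1 s2 A11 A12 A21 A22 xb1 xb2 xs1 xs2 : ℝ) : Prop :=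
  xb1 < xs1 ∧ xs1 < xb2 ∧ xb1 < xs2 ∧ xs2 < xb2 ∧
  deriv (phi1 ρ (Real.sqrt (2 * ρ / σ ^ 2)) s1 A11 A12) xs1 = lam ∧
  deriv (deriv (phi1 ρ (Real.sqrt (2 * ρ / σ ^ 2)) s1 A11 A12)) xs1 ≤ 0 ∧
  deriv (phi1 ρ (Real.sqrt (2 * ρ / σ ^ 2)) s1 A11 A12) xb1 = lam ∧
  phi1 ρ (Real.sqrt (2 * ρ / σ ^ 2)) s1 A11 A12 xb1
    = phi1 ρ (Real.sqrt (2 * ρ / σ ^ 2)) s1 A11 A12 xs1 - c - lam * (xs1 - xb1) ∧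
  phi1 ρ (Real.sqrt (2 * ρ / σ ^ 2)) s1 A11 A12 xb2
    = phi1 ρ (Real.sqrt (2 * ρ / σ ^ 2)) s1 A11 A12 xs2 + ct + lamt * (xb2 - xs2) ∧
  deriv (phi2 ρ (Real.sqrt (2 * ρ / σ ^ 2)) s2 A21 A22) xs2 = -lam ∧
  deriv (deriv (phi2 ρ (Real.sqrt (2 * ρ / σ ^ 2)) s2 A21 A22)) xs2 ≤ 0 ∧
  deriv (phi2 ρ (Real.sqrt (2 * ρ / σ ^ 2)) s2 A21 A22) xb2 = -lam ∧
  phi2 ρ (Real.sqrt (2 * ρ / σ ^ 2)) s2 A21 A22 xb1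
    = phi2 ρ (Real.sqrt (2 * ρ / σ ^ 2)) s2 A21 A22 xs1 + ct + lamt * (xs1 - xb1) ∧
  phi2 ρ (Real.sqrt (2 * ρ / σ ^ 2)) s2 A21 A22 xb2
    = phi2 ρ (Real.sqrt (2 * ρ / σ ^ 2)) s2 A21 A22 xs2 - c - lam * (xb2 - xs2)

lemma phi2_hasDerivAt (ρ θ s2 A21 A22 x : ℝ) :
    HasDerivAt (phi2 ρ θ s2 A21 A22)
      (A21 * θ * Real.exp (θ * x) - A22 * θ * Real.exp (-(θ * x)) - 1 / ρ) x := by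
  have h1 : HasDerivAt (fun y : ℝ => θ * y) θ x := by
    simpa using (hasDerivAt_id x).const_mul θ
  have h2 := h1.exp
  have h3 : HasDerivAt (fun y : ℝ => -(θ * y)) (-θ) x := h1.neg
  have h4 := h3.exp
  have h5 : HasDerivAt (fun y : ℝ => (s2 - y) / ρ) (-1 / ρ) x := by
    simpa using ((hasDerivAt_id x).const_sub s2).div_const ρ
  have := ((h2.const_mul A21).add (h4.const_mul A22)).add h5
  refine this.congr_deriv ?_
  ring

lemma phi2_deriv_eq (ρ θ s2 A21 A22 : ℝ) :
    deriv (phi2 ρ θ s2 A21 A22)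
      = fun x => A21 * θ * Real.exp (θ * x) - A22 * θ * Real.exp (-(θ * x)) - 1 / ρ :=
  funext fun x => (phi2_hasDerivAt ρ θ s2 A21 A22 x).deriv

lemma phi2_deriv2 (ρ θ s2 A21 A22 x : ℝ) :
    deriv (deriv (phi2 ρ θ s2 A21 A22)) x
      = A21 * θ * θ * Real.exp (θ * x) + A22 * θ * θ * Real.exp (-(θ * x)) := by
  rw [phi2_deriv_eq]
  have h1 : HasDerivAt (fun y : ℝ => θ * y) θ x := by
    simpa using (hasDerivAt_id x).const_mul θ
  have h3 : HasDerivAt (fun y : ℝ => -(θ * y)) (-θ) x := h1.neg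
  have h5 : HasDerivAt
      (fun y => A21 * θ * Real.exp (θ * y) - A22 * θ * Real.exp (-(θ * y)) - 1 / ρ)
      (A21 * θ * θ * Real.exp (θ * x) + A22 * θ * θ * Real.exp (-(θ * x))) x := by
    have := ((h1.exp.const_mul (A21 * θ)).sub (h3.exp.const_mul (A22 * θ))).sub_const (1 / ρ)
    refine this.congr_deriv ?_
    ring
  exact h5.deriv

lemma key_ineq (A21 A22 Es Fs Eb Fb : ℝ) (hA21 : 0 < A21) (hA22 : A22 < 0)
    (hEsFs : Es * Fs = 1) (hEbFb : Eb * Fb = 1) (hEslt : Es < Eb)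
    (hsum : A21 * Es - A22 * Fs = A21 * Eb - A22 * Fb)
    (hconc : A21 * Es + A22 * Fs ≤ 0) : 0 ≤ A21 * Eb + A22 * Fb := by
  have hprod : (A21 * Eb) * (-A22 * Fb) = (A21 * Es) * (-A22 * Fs) := by
    have e1 : (A21 * Eb) * (-A22 * Fb) = -(A21 * A22) * (Eb * Fb) := by ring
    have e2 : (A21 * Es) * (-A22 * Fs) = -(A21 * A22) * (Es * Fs) := by ring
    rw [e1, e2, hEbFb, hEsFs]
  have hfac : (A21 * Eb - A21 * Es) * (A21 * Eb - (-A22 * Fs)) = 0 := by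
    linear_combination (-(A21 * Eb)) * hsum - hprod
  have hne : 0 < A21 * Eb - A21 * Es := by
    nlinarith [mul_pos hA21 (sub_pos.mpr hEslt)]
  have hab : A21 * Eb = -A22 * Fs := by
    rcases mul_eq_zero.mp hfac with h | h
    · linarith
    · linarith
  have hbb : -A22 * Fb = A21 * Es := by linarith
  linarith

/-- On `[x̄₂, ∞)` the function `Ṽ₂(x) = φ₂(x₂*) − c − λ(x − x₂*)` satisfies
`s₂ − x ≤ ρ Ṽ₂(x)`, i.e. `−ρṼ₂(x) + (s₂ − x) ≤ 0`. -/
theorem stmt_11 (ρ σ lam lamt c ct s1 s2 : ℝ) (hρ : 0 < ρ) (hσ : 0 < σ)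
    (h1 : 0 < 1 - lam * ρ) (h2 : lamt ≤ lam) (h3 : 0 ≤ lamt)
    (h4 : ct ≤ c) (h5 : 0 ≤ ct) (h6 : 0 < c)
    (h7 : (c, lam) ≠ (ct, lamt)) (h8 : s1 < s2)
    (A11 A12 A21 A22 xb1 xb2 xs1 xs2 : ℝ)
    (hS : SystemS ρ σ lam lamt c ct s1 s2 A11 A12 A21 A22 xb1 xb2 xs1 xs2)
    (hA21 : 0 < A21) (hA22 : A22 < 0) :
    ∀ x : ℝ, xb2 ≤ x →
      s2 - x ≤ ρ * (phi2 ρ (Real.sqrt (2 * ρ / σ ^ 2)) s2 A21 A22 xs2 - c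
        - lam * (x - xs2)) ∧
      -(ρ * (phi2 ρ (Real.sqrt (2 * ρ / σ ^ 2)) s2 A21 A22 xs2 - c
        - lam * (x - xs2))) + (s2 - x) ≤ 0 := by
  intro x hx
  obtain ⟨o1, o2, o3, o4, -, -, -, -, -, hds, hdds, hdb, -, heq⟩ := hS
  rw [phi2_deriv_eq] at hds hdb
  rw [phi2_deriv2] at hdds
  simp only at hds hdb
  simp only [phi2] at heq ⊢
  set θ : ℝ := Real.sqrt (2 * ρ / σ ^ 2) with hθdef
  have hθ : 0 < θ := Real.sqrt_pos.mpr (by positivity)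
  set Es := Real.exp (θ * xs2) with hEs
  set Fs := Real.exp (-(θ * xs2)) with hFs
  set Eb := Real.exp (θ * xb2) with hEb
  set Fb := Real.exp (-(θ * xb2)) with hFb
  have hEsFs : Es * Fs = 1 := by rw [hEs, hFs, ← Real.exp_add]; simp
  have hEbFb : Eb * Fb = 1 := by rw [hEb, hFb, ← Real.exp_add]; simp
  have hEslt : Es < Eb :=
    Real.exp_lt_exp.mpr (mul_lt_mul_of_pos_left o4 hθ)
  have hsum : A21 * Es - A22 * Fs = A21 * Eb - A22 * Fb := by
    have hθne : θ ≠ 0 := ne_of_gt hθ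
    have hmul : θ * (A21 * Es - A22 * Fs) = θ * (A21 * Eb - A22 * Fb) := by
      linear_combination hds - hdb
    exact mul_left_cancel₀ hθne hmul
  have hconc : A21 * Es + A22 * Fs ≤ 0 := by
    by_contra h
    push_neg at h
    nlinarith [mul_pos (mul_pos hθ hθ) h]
  have hkey : 0 ≤ A21 * Eb + A22 * Fb :=
    key_ineq A21 A22 Es Fs Eb Fb hA21 hA22 hEsFs hEbFb hEslt hsum hconc
  have hρne : ρ ≠ 0 := ne_of_gt hρ
  have hd1 : ρ * ((s2 - xs2) / ρ) = s2 - xs2 := by field_simp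
  have hd2 : ρ * ((s2 - xb2) / ρ) = s2 - xb2 := by field_simp
  have e2 : A21 * Es + A22 * Fs + (s2 - xs2) / ρ - c - lam * (x - xs2)
      = A21 * Eb + A22 * Fb + (s2 - xb2) / ρ - lam * (x - xb2) := by
    linarith [heq]
  have hmain : s2 - x
      ≤ ρ * (A21 * Es + A22 * Fs + (s2 - xs2) / ρ - c - lam * (x - xs2)) := by
    rw [e2]
    have e3 : ρ * (A21 * Eb + A22 * Fb + (s2 - xb2) / ρ - lam * (x - xb2))
        = ρ * (A21 * Eb + A22 * Fb) + ρ * ((s2 - xb2) / ρ) - ρ * (lam * (x - xb2)) := by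
      ring
    rw [e3, hd2]
    nlinarith [mul_nonneg hρ.le hkey, mul_nonneg (sub_nonneg.mpr hx) h1.le]
  exact ⟨hmain, by linarith⟩
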